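/- arXiv:1911.09364 — 2 statements merged into one kernel-verified Lean document; each statement's English description precedes it below -/
import Mathlib

section
/- Let R be a ring, M = (M_i)_{i=1}^n a family of R-bimodules, and Φ_{i,j} : M_i × M_j → M_{i+j} (for i+j ≤ n) R-bilinear maps satisfying the associativity condition Φ_{i+j,k}(Φ_{i,j}(m_i,m_j), m_k) = Φ_{i,j+k}(m_i, Φ_{j,k}(m_j,m_k)). Then the additive group R ⊕ M_1 ⊕ ⋯ ⊕ M_n with multiplication (m_0,…,m_n)(m'_0,…,m'_n) = (∑_{i+j=k} m_i m'_j)_{k=0}^n is an associative ring with identity (1,0,…,0), called the n-trivial extension R ⋉_n M. -/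
/-! Preamble: the `n`-trivial extension ring `R ⋉ₙ M` of a ring `R` by a family
`M = (M_i)_{1 ≤ i ≤ n}` of `R`-bimodules (a right `R`-action is encoded as a
`Rᵐᵒᵖ`-module structure) with associative bilinear pre-products
`Φ_{i,j} : M_i × M_j → M_{i+j}`. -/

namespace NTriv

variable (R : Type) [Ring R] (M : ℕ → Type)
variable [∀ i, AddCommGroup (M i)] [∀ i, Module R (M i)] [∀ i, Module Rᵐᵒᵖ (M i)]
variable [∀ i, SMulCommClass R Rᵐᵒᵖ (M i)]

/-- The extended family of abelian groups: index `0` is `R` itself, index `i+1` is `M (i+1)`. -/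
def ExtFam : ℕ → Type
  | 0 => R
  | i + 1 => M (i + 1)

instance : ∀ i, AddCommGroup (ExtFam R M i)
  | 0 => inferInstanceAs (AddCommGroup R)
  | i + 1 => inferInstanceAs (AddCommGroup (M (i + 1)))

instance : ∀ i, Module R (ExtFam R M i)
  | 0 => inferInstanceAs (Module R R)
  | i + 1 => inferInstanceAs (Module R (M (i + 1)))

instance : ∀ i, Module Rᵐᵒᵖ (ExtFam R M i)
  | 0 => inferInstanceAs (Module Rᵐᵒᵖ R)
  | i + 1 => inferInstanceAs (Module Rᵐᵒᵖ (M (i + 1)))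

/-- Transport along an equality of indices. -/
def ecast {i j : ℕ} (h : i = j) (x : ExtFam R M i) : ExtFam R M j := h ▸ x

/-- Transport along an equality of indices, for the family `M`. -/
def mcast {i j : ℕ} (h : i = j) (x : M i) : M j := h ▸ x

/-- Identification `ExtFam R M 0 = R`. -/
def toR (x : ExtFam R M 0) : R := x

/-- Identification `ExtFam R M (i+1) = M (i+1)`. -/
def toM {i : ℕ} (x : ExtFam R M (i + 1)) : M (i + 1) := x

/-- Identification `M (i+1) = ExtFam R M (i+1)`. -/
def ofM {i : ℕ} (x : M (i + 1)) : ExtFam R M (i + 1) := x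

/-- The product on the extended family induced by the pre-products `Φ`:
at index `0` it is the multiplication of `R`, and mixed products with index `0`
are given by the left and right `R`-module structures. -/
def extProd (Φ : ∀ i j, M i → M j → M (i + j)) :
    ∀ i j, ExtFam R M i → ExtFam R M j → ExtFam R M (i + j)
  | 0, 0, r, s => toR R M r * toR R M s
  | 0, j + 1, r, b => ofM R M (mcast (M := M) (by show j + 1 = 0 + j + 1; omega) (toR R M r • toM R M b))
  | i + 1, 0, a, r => ofM R M (MulOpposite.op (toR R M r) • toM R M a)
  | i + 1, j + 1, a, b => Φ (i + 1) (j + 1) (toM R M a) (toM R M b)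

/-- The underlying additive group `R ⊕ M₁ ⊕ ⋯ ⊕ M_n` of the `n`-trivial extension. -/
def Car (n : ℕ) := ∀ k : Fin (n + 1), ExtFam R M k

instance (n : ℕ) : AddCommGroup (Car R M n) := inferInstanceAs (AddCommGroup (∀ k : Fin (n+1), ExtFam R M k))

variable (n : ℕ)

/-- Extension of an element of the carrier to a function on all of `ℕ`, by zero. -/
def pad (x : Car R M n) (i : ℕ) : ExtFam R M i :=
  if h : i < n + 1 then x ⟨i, h⟩ else 0

/-- The multiplication of the `n`-trivial extension:
`((m_i)ᵢ ⬝ (m'_j)_j)_k = ∑_{i+j=k} m_i m'_j`. -/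
def trivMul (Φ : ∀ i j, M i → M j → M (i + j)) (x y : Car R M n) : Car R M n :=
  fun k => ∑ i ∈ Finset.range (n + 1),
    if h : i ≤ (k : ℕ) then
      ecast R M (by omega) (extProd R M Φ i ((k : ℕ) - i) (pad R M n x i) (pad R M n y ((k : ℕ) - i)))
    else 0

/-- `(1,0,…,0)` as a dependent function on `ℕ`. -/
def oneN : ∀ i : ℕ, ExtFam R M i
  | 0 => (1 : R)
  | _ + 1 => 0

/-- The identity element `(1,0,…,0)` of the `n`-trivial extension. -/
def trivOne : Car R M n := fun k => oneN R M k

end NTriv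

namespace NTriv

variable (R : Type) [Ring R] (M : ℕ → Type)
variable [∀ i, AddCommGroup (M i)] [∀ i, Module R (M i)] [∀ i, Module Rᵐᵒᵖ (M i)]
variable [∀ i, SMulCommClass R Rᵐᵒᵖ (M i)]
variable (n : ℕ)


section Aux

variable {α : Type*}

/-! ### Cast lemmas -/

lemma ecast_self {i : ℕ} (h : i = i) (x : ExtFam R M i) : ecast R M h x = x := rfl

lemma ecast_trans {i j l : ℕ} (h1 : i = j) (h2 : j = l) (x : ExtFam R M i) :
    ecast R M h2 (ecast R M h1 x) = ecast R M (h1.trans h2) x := by subst h1; subst h2; rfl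

lemma ecast_zero {i j : ℕ} (h : i = j) : ecast R M h (0 : ExtFam R M i) = 0 := by
  subst h; rfl

lemma ecast_add {i j : ℕ} (h : i = j) (x y : ExtFam R M i) :
    ecast R M h (x + y) = ecast R M h x + ecast R M h y := by subst h; rfl

lemma ecast_sum {i j : ℕ} {s : Finset α} (h : i = j) (f : α → ExtFam R M i) :
    ecast R M h (∑ a ∈ s, f a) = ∑ a ∈ s, ecast R M h (f a) := by subst h; rfl

lemma apply_ecast (f : ∀ i, ExtFam R M i) {i j : ℕ} (h : i = j) :
    f j = ecast R M h (f i) := by subst h; rfl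

lemma mcast_add {i j : ℕ} (h : i = j) (x y : M i) :
    mcast (M := M) h (x + y) = mcast (M := M) h x + mcast (M := M) h y := by subst h; rfl

lemma mcast_smul {i j : ℕ} (h : i = j) (r : R) (x : M i) :
    mcast (M := M) h (r • x) = r • mcast (M := M) h x := by subst h; rfl

lemma mcast_smul_op {i j : ℕ} (h : i = j) (r : Rᵐᵒᵖ) (x : M i) :
    mcast (M := M) h (r • x) = r • mcast (M := M) h x := by subst h; rfl

lemma mcast_mcast {i j l : ℕ} (h1 : i = j) (h2 : j = l) (x : M i) :
    mcast (M := M) h2 (mcast (M := M) h1 x) = mcast (M := M) (h1.trans h2) x := by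
  subst h1; subst h2; rfl

lemma mcast_self {i : ℕ} (h : i = i) (x : M i) : mcast (M := M) h x = x := rfl

lemma ecast_eq_mcast {i j : ℕ} (h : i + 1 = j + 1) (x : M (i + 1)) :
    ecast R M h x = mcast (M := M) h x := by
  obtain rfl : i = j := by omega
  rfl

lemma ecast_ofM {i j : ℕ} (h : i + 1 = j + 1) (x : M (i + 1)) :
    ecast R M h (ofM R M x) = ofM R M (mcast (M := M) h x) := by
  obtain rfl : i = j := by omega
  rfl

lemma mcast_Φ_left (Φ : ∀ i j, M i → M j → M (i + j)) {i i' j : ℕ}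
    (h : i = i') (a : M i) (b : M j) :
    Φ i' j (mcast (M := M) h a) b = mcast (M := M) (by rw [h]) (Φ i j a b) := by
  subst h; rfl

lemma mcast_Φ_right (Φ : ∀ i j, M i → M j → M (i + j)) {i j j' : ℕ}
    (h : j = j') (a : M i) (b : M j) :
    Φ i j' a (mcast (M := M) h b) = mcast (M := M) (by rw [h]) (Φ i j a b) := by
  subst h; rfl

lemma ecast_extProd_left (Φ : ∀ i j, M i → M j → M (i + j)) {i i' j : ℕ}
    (h : i = i') (a : ExtFam R M i) (b : ExtFam R M j) :
    extProd R M Φ i' j (ecast R M h a) b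
      = ecast R M (by rw [h]) (extProd R M Φ i j a b) := by
  subst h; rfl

lemma ecast_extProd_right (Φ : ∀ i j, M i → M j → M (i + j)) {i j j' : ℕ}
    (h : j = j') (a : ExtFam R M i) (b : ExtFam R M j) :
    extProd R M Φ i j' a (ecast R M h b)
      = ecast R M (by rw [h]) (extProd R M Φ i j a b) := by
  subst h; rfl

/-! ### Additivity of `extProd` -/

lemma extProd_add_left (Φ : ∀ i j, M i → M j → M (i + j))
    (hadd_left : ∀ i j (a a' : M i) (b : M j), Φ i j (a + a') b = Φ i j a b + Φ i j a' b)
    (i j : ℕ) (a a' : ExtFam R M i) (b : ExtFam R M j) :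
    extProd R M Φ i j (a + a') b = extProd R M Φ i j a b + extProd R M Φ i j a' b := by
  match i, j with
  | 0, 0 =>
      show (toR R M a + toR R M a') * toR R M b
        = toR R M a * toR R M b + toR R M a' * toR R M b
      exact add_mul _ _ _
  | 0, j + 1 =>
      show ofM R M (mcast (M := M) _ ((toR R M a + toR R M a') • toM R M b)) = _
      rw [add_smul, mcast_add]
      rfl
  | i + 1, 0 =>
      show ofM R M (MulOpposite.op (toR R M b) • (toM R M a + toM R M a')) = _
      rw [smul_add]
      rfl
  | i + 1, j + 1 => exact hadd_left _ _ _ _ _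

lemma extProd_add_right (Φ : ∀ i j, M i → M j → M (i + j))
    (hadd_right : ∀ i j (a : M i) (b b' : M j), Φ i j a (b + b') = Φ i j a b + Φ i j a b')
    (i j : ℕ) (a : ExtFam R M i) (b b' : ExtFam R M j) :
    extProd R M Φ i j a (b + b') = extProd R M Φ i j a b + extProd R M Φ i j a b' := by
  match i, j with
  | 0, 0 =>
      show toR R M a * (toR R M b + toR R M b')
        = toR R M a * toR R M b + toR R M a * toR R M b'
      exact mul_add _ _ _
  | 0, j + 1 =>
      show ofM R M (mcast (M := M) _ (toR R M a • (toM R M b + toM R M b'))) = _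
      rw [smul_add, mcast_add]
      rfl
  | i + 1, 0 =>
      show ofM R M (MulOpposite.op (toR R M b + toR R M b') • toM R M a) = _
      rw [MulOpposite.op_add, add_smul]
      rfl
  | i + 1, j + 1 => exact hadd_right _ _ _ _ _

lemma extProd_zero_left (Φ : ∀ i j, M i → M j → M (i + j))
    (hadd_left : ∀ i j (a a' : M i) (b : M j), Φ i j (a + a') b = Φ i j a b + Φ i j a' b)
    (i j : ℕ) (b : ExtFam R M j) :
    extProd R M Φ i j 0 b = 0 := by
  have h : extProd R M Φ i j 0 b + extProd R M Φ i j 0 b = extProd R M Φ i j 0 b := by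
    rw [← extProd_add_left R M Φ hadd_left, add_zero]
  exact add_eq_right.mp h

lemma extProd_zero_right (Φ : ∀ i j, M i → M j → M (i + j))
    (hadd_right : ∀ i j (a : M i) (b b' : M j), Φ i j a (b + b') = Φ i j a b + Φ i j a b')
    (i j : ℕ) (a : ExtFam R M i) :
    extProd R M Φ i j a 0 = 0 := by
  have h : extProd R M Φ i j a 0 + extProd R M Φ i j a 0 = extProd R M Φ i j a 0 := by
    rw [← extProd_add_right R M Φ hadd_right, add_zero]
  exact add_eq_right.mp h

lemma extProd_sum_left (Φ : ∀ i j, M i → M j → M (i + j))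
    (hadd_left : ∀ i j (a a' : M i) (b : M j), Φ i j (a + a') b = Φ i j a b + Φ i j a' b)
    (i j : ℕ) {s : Finset α} (u : α → ExtFam R M i) (b : ExtFam R M j) :
    extProd R M Φ i j (∑ a ∈ s, u a) b = ∑ a ∈ s, extProd R M Φ i j (u a) b := by
  classical
  induction s using Finset.induction_on with
  | empty => simpa using extProd_zero_left R M Φ hadd_left i j b
  | insert x s hx ih =>
      rw [Finset.sum_insert hx, Finset.sum_insert hx,
        extProd_add_left R M Φ hadd_left, ih]

lemma extProd_sum_right (Φ : ∀ i j, M i → M j → M (i + j))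
    (hadd_right : ∀ i j (a : M i) (b b' : M j), Φ i j a (b + b') = Φ i j a b + Φ i j a b')
    (i j : ℕ) {s : Finset α} (a : ExtFam R M i) (v : α → ExtFam R M j) :
    extProd R M Φ i j a (∑ x ∈ s, v x) = ∑ x ∈ s, extProd R M Φ i j a (v x) := by
  classical
  induction s using Finset.induction_on with
  | empty => simpa using extProd_zero_right R M Φ hadd_right i j a
  | insert x s hx ih =>
      rw [Finset.sum_insert hx, Finset.sum_insert hx,
        extProd_add_right R M Φ hadd_right, ih]

lemma extProd_one_left (Φ : ∀ i j, M i → M j → M (i + j)) (j : ℕ) (b : ExtFam R M j) :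
    extProd R M Φ 0 j (oneN R M 0) b = ecast R M (Nat.zero_add j).symm b := by
  match j with
  | 0 =>
      show (1 : R) * toR R M b = toR R M b
      exact one_mul _
  | j + 1 =>
      have h2 : ecast R M (Nat.zero_add (j+1)).symm b
          = ofM R M (mcast (M := M) (Nat.zero_add (j+1)).symm (toM R M b)) :=
        ecast_ofM R M _ _
      rw [h2]
      show ofM R M (mcast (M := M) _ ((1 : R) • toM R M b)) = _
      rw [one_smul]

lemma extProd_one_right (Φ : ∀ i j, M i → M j → M (i + j)) (i : ℕ) (a : ExtFam R M i) :
    extProd R M Φ i 0 a (oneN R M 0) = a := by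
  match i with
  | 0 =>
      show toR R M a * (1 : R) = toR R M a
      exact mul_one _
  | i + 1 =>
      show ofM R M (MulOpposite.op (1 : R) • toM R M a) = a
      rw [MulOpposite.op_one, one_smul]
      rfl

lemma extProd_assoc (Φ : ∀ i j, M i → M j → M (i + j))
    (hsmul_left : ∀ i j (r : R) (a : M i) (b : M j), Φ i j (r • a) b = r • Φ i j a b)
    (hsmul_right : ∀ i j (r : Rᵐᵒᵖ) (a : M i) (b : M j), Φ i j a (r • b) = r • Φ i j a b)
    (hbalanced : ∀ i j (r : R) (a : M i) (b : M j),
      Φ i j (MulOpposite.op r • a) b = Φ i j a (r • b))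
    (hassoc : ∀ i j k (a : M i) (b : M j) (c : M k),
      Φ (i + j) k (Φ i j a b) c = mcast (M := M) (add_assoc i j k).symm (Φ i (j + k) a (Φ j k b c)))
    (i j k : ℕ) (a : ExtFam R M i) (b : ExtFam R M j) (c : ExtFam R M k) :
    extProd R M Φ (i + j) k (extProd R M Φ i j a b) c
      = ecast R M (add_assoc i j k).symm
          (extProd R M Φ i (j + k) a (extProd R M Φ j k b c)) := by
  match i, j, k with
  | 0, 0, 0 =>
      show (toR R M a * toR R M b) * toR R M c = toR R M a * (toR R M b * toR R M c)
      exact mul_assoc _ _ _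
  | 0, 0, k + 1 =>
      have e1 : extProd R M Φ 0 (0 + (k + 1)) a (extProd R M Φ 0 (k + 1) b c)
          = ofM R M (mcast (M := M) (by omega : (0 + k) + 1 = 0 + (0 + k) + 1)
              (toR R M a • mcast (M := M) (by omega : k + 1 = 0 + k + 1)
                (toR R M b • toM R M c))) := rfl
      rw [e1, ecast_ofM, mcast_mcast, ← mcast_smul, mcast_mcast, ← mul_smul]
      rfl
  | 0, j + 1, 0 =>
      show ofM R M (MulOpposite.op (toR R M c) •
              mcast (M := M) (by omega : j + 1 = 0 + j + 1) (toR R M a • toM R M b))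
          = ofM R M (mcast (M := M) (by omega : j + 1 = 0 + j + 1)
              (toR R M a • (MulOpposite.op (toR R M c) • toM R M b)))
      rw [← mcast_smul_op]
      exact congrArg _ (congrArg _ (smul_comm _ _ _).symm)
  | 0, j + 1, k + 1 =>
      have e1 : extProd R M Φ (0 + (j + 1)) (k + 1) (extProd R M Φ 0 (j + 1) a b) c
          = Φ (0 + j + 1) (k + 1)
              (mcast (M := M) (by omega : j + 1 = 0 + j + 1) (toR R M a • toM R M b))
              (toM R M c) := rfl
      have e2 : extProd R M Φ 0 ((j + 1) + (k + 1)) a (extProd R M Φ (j + 1) (k + 1) b c)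
          = ofM R M (mcast (M := M) (by omega : (j + 1) + k + 1 = 0 + ((j + 1) + k) + 1)
              (toR R M a • Φ (j + 1) (k + 1) (toM R M b) (toM R M c))) := rfl
      rw [e1, e2, mcast_Φ_left (M := M) (Φ := Φ), hsmul_left, ecast_ofM, mcast_mcast]
      rfl
  | i + 1, 0, 0 =>
      show ofM R M (MulOpposite.op (toR R M c) • (MulOpposite.op (toR R M b) • toM R M a))
          = ofM R M (MulOpposite.op (toR R M b * toR R M c) • toM R M a)
      rw [MulOpposite.op_mul, mul_smul]
  | i + 1, 0, k + 1 =>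
      have e2 : extProd R M Φ (i + 1) (0 + (k + 1)) a (extProd R M Φ 0 (k + 1) b c)
          = Φ (i + 1) (0 + k + 1) (toM R M a)
              (mcast (M := M) (by omega : k + 1 = 0 + k + 1) (toR R M b • toM R M c)) := rfl
      rw [e2, mcast_Φ_right (M := M) (Φ := Φ), ecast_eq_mcast, mcast_mcast]
      show Φ (i + 1) (k + 1) (MulOpposite.op (toR R M b) • toM R M a) (toM R M c)
          = mcast (M := M) _ (Φ (i + 1) (k + 1) (toM R M a) (toR R M b • toM R M c))
      rw [mcast_self]
      exact hbalanced _ _ _ _ _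
  | i + 1, j + 1, 0 =>
      show ofM R M (MulOpposite.op (toR R M c) • Φ (i + 1) (j + 1) (toM R M a) (toM R M b))
          = ofM R M (Φ (i + 1) (j + 1) (toM R M a) (MulOpposite.op (toR R M c) • toM R M b))
      exact congrArg _ (hsmul_right _ _ _ _ _).symm
  | i + 1, j + 1, k + 1 =>
      show Φ ((i + 1) + (j + 1)) (k + 1) (Φ (i + 1) (j + 1) (toM R M a) (toM R M b)) (toM R M c)
          = ecast R M (add_assoc (i + 1) (j + 1) (k + 1)).symm
              (Φ (i + 1) ((j + 1) + (k + 1)) (toM R M a)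
                (Φ (j + 1) (k + 1) (toM R M b) (toM R M c)))
      rw [hassoc, ecast_eq_mcast]

/-! ### The convolution product on global sections -/

/-- Convolution product of two globally defined sections. -/
def convP (Φ : ∀ i j, M i → M j → M (i + j)) (f g : ∀ i, ExtFam R M i) (k : ℕ) :
    ExtFam R M k :=
  ∑ i ∈ Finset.range (k + 1),
    if h : i ≤ k then
      ecast R M (by omega) (extProd R M Φ i (k - i) (f i) (g (k - i)))
    else 0

/-- The canonical triple-product summand. -/
def cnvF (Φ : ∀ i j, M i → M j → M (i + j)) (f g h : ∀ i, ExtFam R M i) (k i j : ℕ) :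
    ExtFam R M k :=
  if hij : i + j ≤ k then
    ecast R M (by omega) (extProd R M Φ (i + j) (k - i - j)
      (extProd R M Φ i j (f i) (g j)) (h (k - i - j)))
  else 0

lemma cnvF_zero (Φ : ∀ i j, M i → M j → M (i + j)) (f g h : ∀ i, ExtFam R M i) (k i j : ℕ)
    (hij : ¬ i + j ≤ k) : cnvF R M Φ f g h k i j = 0 := dif_neg hij

lemma oneN_succ (m : ℕ) : oneN R M (m + 1) = 0 := rfl

section ConvLemmas

variable (Φ : ∀ i j, M i → M j → M (i + j))

lemma convP_one_left
    (hadd_left : ∀ i j (a a' : M i) (b : M j), Φ i j (a + a') b = Φ i j a b + Φ i j a' b)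
    (f : ∀ i, ExtFam R M i) (k : ℕ) :
    convP R M Φ (oneN R M) f k = f k := by
  unfold convP
  have h0 : (0 : ℕ) ∈ Finset.range (k + 1) := Finset.mem_range.mpr (Nat.succ_pos k)
  have hside : ∀ b ∈ Finset.range (k + 1), b ≠ 0 →
      (if h : b ≤ k then
        ecast R M (show b + (k - b) = k by omega)
          (extProd R M Φ b (k - b) (oneN R M b) (f (k - b)))
      else 0) = 0 := by
    intro b hb hb0
    have hbk : b ≤ k := Nat.lt_succ_iff.mp (Finset.mem_range.mp hb)
    obtain ⟨m, rfl⟩ : ∃ m, b = m + 1 := ⟨b - 1, by omega⟩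
    rw [dif_pos hbk]
    rw [show oneN R M (m + 1) = 0 from rfl]
    rw [extProd_zero_left R M Φ hadd_left, ecast_zero]
  rw [Finset.sum_eq_single_of_mem 0 h0 hside, dif_pos (Nat.zero_le k),
    extProd_one_left R M Φ, ecast_trans]
  rfl

lemma convP_one_right
    (hadd_right : ∀ i j (a : M i) (b b' : M j), Φ i j a (b + b') = Φ i j a b + Φ i j a b')
    (f : ∀ i, ExtFam R M i) (k : ℕ) :
    convP R M Φ f (oneN R M) k = f k := by
  unfold convP
  have h0 : k ∈ Finset.range (k + 1) := Finset.mem_range.mpr (Nat.lt_succ_self k)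
  have hside : ∀ b ∈ Finset.range (k + 1), b ≠ k →
      (if h : b ≤ k then
        ecast R M (show b + (k - b) = k by omega)
          (extProd R M Φ b (k - b) (f b) (oneN R M (k - b)))
      else 0) = 0 := by
    intro b hb hbk
    have hbk' : b ≤ k := Nat.lt_succ_iff.mp (Finset.mem_range.mp hb)
    obtain ⟨m, hm⟩ : ∃ m, k - b = m + 1 := ⟨k - b - 1, by omega⟩
    rw [dif_pos hbk', apply_ecast R M (oneN R M) hm.symm, oneN_succ, ecast_zero,
      extProd_zero_right R M Φ hadd_right, ecast_zero]
  rw [Finset.sum_eq_single_of_mem k h0 hside, dif_pos le_rfl,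
    apply_ecast R M (oneN R M) (show (0 : ℕ) = k - k by omega),
    ecast_extProd_right R M Φ, extProd_one_right R M Φ, ecast_trans]
  rfl

lemma convP_add_left
    (hadd_left : ∀ i j (a a' : M i) (b : M j), Φ i j (a + a') b = Φ i j a b + Φ i j a' b)
    (f f' g : ∀ i, ExtFam R M i) (k : ℕ) :
    convP R M Φ (fun i => f i + f' i) g k
      = convP R M Φ f g k + convP R M Φ f' g k := by
  unfold convP
  rw [← Finset.sum_add_distrib]
  refine Finset.sum_congr rfl fun i _ => ?_
  by_cases h : i ≤ k
  · rw [dif_pos h, dif_pos h, dif_pos h, extProd_add_left R M Φ hadd_left, ecast_add]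
  · rw [dif_neg h, dif_neg h, dif_neg h, add_zero]

lemma convP_add_right
    (hadd_right : ∀ i j (a : M i) (b b' : M j), Φ i j a (b + b') = Φ i j a b + Φ i j a b')
    (f g g' : ∀ i, ExtFam R M i) (k : ℕ) :
    convP R M Φ f (fun i => g i + g' i) k
      = convP R M Φ f g k + convP R M Φ f g' k := by
  unfold convP
  rw [← Finset.sum_add_distrib]
  refine Finset.sum_congr rfl fun i _ => ?_
  by_cases h : i ≤ k
  · rw [dif_pos h, dif_pos h, dif_pos h, extProd_add_right R M Φ hadd_right, ecast_add]
  · rw [dif_neg h, dif_neg h, dif_neg h, add_zero]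

lemma convP_assoc
    (hadd_left : ∀ i j (a a' : M i) (b : M j), Φ i j (a + a') b = Φ i j a b + Φ i j a' b)
    (hadd_right : ∀ i j (a : M i) (b b' : M j), Φ i j a (b + b') = Φ i j a b + Φ i j a b')
    (hsmul_left : ∀ i j (r : R) (a : M i) (b : M j), Φ i j (r • a) b = r • Φ i j a b)
    (hsmul_right : ∀ i j (r : Rᵐᵒᵖ) (a : M i) (b : M j), Φ i j a (r • b) = r • Φ i j a b)
    (hbalanced : ∀ i j (r : R) (a : M i) (b : M j),
      Φ i j (MulOpposite.op r • a) b = Φ i j a (r • b))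
    (hassoc : ∀ i j k (a : M i) (b : M j) (c : M k),
      Φ (i + j) k (Φ i j a b) c = mcast (M := M) (add_assoc i j k).symm (Φ i (j + k) a (Φ j k b c)))
    (f g h : ∀ i, ExtFam R M i) (k : ℕ) :
    convP R M Φ (convP R M Φ f g) h k = convP R M Φ f (convP R M Φ g h) k := by
  classical
  -- the key termwise identifications
  have hFt : ∀ (i a : ℕ), i ≤ a → a ≤ k → ∀ (H1 : a + (k - a) = k) (H2 : i + (a - i) = a),
      ecast R M H1 (extProd R M Φ a (k - a)
        (ecast R M H2 (extProd R M Φ i (a - i) (f i) (g (a - i)))) (h (k - a)))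
        = cnvF R M Φ f g h k i (a - i) := by
    intro i a hia hak H1 H2
    unfold cnvF
    rw [dif_pos (show i + (a - i) ≤ k by omega)]
    rw [apply_ecast R M h (show k - a = k - i - (a - i) by omega),
      ecast_extProd_right R M Φ, ecast_extProd_left R M Φ, ecast_trans, ecast_trans]
  have hGt : ∀ (i j : ℕ), i ≤ k → j ≤ k - i →
      ∀ (H1 : i + (k - i) = k) (H2 : j + (k - i - j) = k - i),
      ecast R M H1 (extProd R M Φ i (k - i) (f i)
        (ecast R M H2 (extProd R M Φ j (k - i - j) (g j) (h (k - i - j)))))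
        = cnvF R M Φ f g h k i j := by
    intro i j hik hjk H1 H2
    unfold cnvF
    rw [dif_pos (show i + j ≤ k by omega)]
    rw [ecast_extProd_right R M Φ, ecast_trans,
      extProd_assoc R M Φ hsmul_left hsmul_right hbalanced hassoc, ecast_trans]
  have hL : convP R M Φ (convP R M Φ f g) h k
      = ∑ a ∈ Finset.range (k + 1), ∑ i ∈ Finset.range (k + 1),
          (if i ≤ a then cnvF R M Φ f g h k i (a - i) else 0) := by
    unfold convP
    refine Finset.sum_congr rfl fun a ha => ?_
    have hak : a ≤ k := Nat.lt_succ_iff.mp (Finset.mem_range.mp ha)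
    rw [dif_pos hak, extProd_sum_left R M Φ hadd_left, ecast_sum]
    have step : ∀ i ∈ Finset.range (a + 1),
        ecast R M (by omega : a + (k - a) = k)
          (extProd R M Φ a (k - a)
            (if h' : i ≤ a then
              ecast R M (by omega) (extProd R M Φ i (a - i) (f i) (g (a - i)))
            else 0) (h (k - a)))
        = cnvF R M Φ f g h k i (a - i) := by
      intro i hi
      have hia : i ≤ a := Nat.lt_succ_iff.mp (Finset.mem_range.mp hi)
      rw [dif_pos hia]
      exact hFt i a hia hak _ _
    rw [Finset.sum_congr rfl step]
    -- extend the inner sum from `range (a+1)` to `range (k+1)`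
    calc ∑ i ∈ Finset.range (a + 1), cnvF R M Φ f g h k i (a - i)
        = ∑ i ∈ Finset.range (a + 1), (if i ≤ a then cnvF R M Φ f g h k i (a - i) else 0) :=
          Finset.sum_congr rfl fun i hi =>
            (if_pos (Nat.lt_succ_iff.mp (Finset.mem_range.mp hi))).symm
      _ = ∑ i ∈ Finset.range (k + 1), (if i ≤ a then cnvF R M Φ f g h k i (a - i) else 0) := by
          refine Finset.sum_subset (Finset.range_subset_range.mpr (by omega)) fun i hi hni => ?_
          exact if_neg (by simp only [Finset.mem_range] at hi hni; omega)
  have hR : convP R M Φ f (convP R M Φ g h) k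
      = ∑ i ∈ Finset.range (k + 1), ∑ j ∈ Finset.range (k + 1), cnvF R M Φ f g h k i j := by
    unfold convP
    refine Finset.sum_congr rfl fun i hi => ?_
    have hik : i ≤ k := Nat.lt_succ_iff.mp (Finset.mem_range.mp hi)
    rw [dif_pos hik, extProd_sum_right R M Φ hadd_right, ecast_sum]
    have step : ∀ j ∈ Finset.range (k - i + 1),
        ecast R M (by omega : i + (k - i) = k)
          (extProd R M Φ i (k - i) (f i)
            (if h' : j ≤ k - i then
              ecast R M (by omega) (extProd R M Φ j (k - i - j) (g j) (h (k - i - j)))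
            else 0))
        = cnvF R M Φ f g h k i j := by
      intro j hj
      have hjk : j ≤ k - i := Nat.lt_succ_iff.mp (Finset.mem_range.mp hj)
      rw [dif_pos hjk]
      exact hGt i j hik hjk _ _
    rw [Finset.sum_congr rfl step]
    refine Finset.sum_subset (Finset.range_subset_range.mpr (by omega)) fun j hj hnj => ?_
    refine cnvF_zero R M Φ f g h k i j ?_
    simp only [Finset.mem_range] at hj hnj
    omega
  rw [hL, hR, Finset.sum_comm]
  refine Finset.sum_congr rfl fun i hi => ?_
  have hik : i ≤ k := Nat.lt_succ_iff.mp (Finset.mem_range.mp hi)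
  have hfilter : Finset.filter (fun a => i ≤ a) (Finset.range (k + 1)) = Finset.Ico i (k + 1) := by
    ext a
    simp only [Finset.mem_filter, Finset.mem_range, Finset.mem_Ico, Nat.lt_succ_iff]
    omega
  rw [← Finset.sum_filter, hfilter, Finset.sum_Ico_eq_sum_range]
  simp only [Nat.add_sub_cancel_left]
  refine Finset.sum_subset (Finset.range_subset_range.mpr (by omega)) fun j hj hnj => ?_
  refine cnvF_zero R M Φ f g h k i j ?_
  simp only [Finset.mem_range] at hj hnj
  omega

end ConvLemmas

/-! ### Relating `trivMul` to the convolution product -/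

lemma eq_zero_of_gt (htriv : ∀ i, n < i → Subsingleton (M i)) {i : ℕ} (hi : n < i)
    (x : ExtFam R M i) : x = 0 := by
  match i with
  | 0 => exact absurd hi (Nat.not_lt_zero n)
  | m + 1 =>
      haveI : Subsingleton (ExtFam R M (m + 1)) := htriv (m + 1) hi
      exact Subsingleton.elim x 0

lemma pad_apply (x : Car R M n) (k : Fin (n + 1)) : pad R M n x (k : ℕ) = x k := by
  unfold pad
  rw [dif_pos k.isLt]

lemma pad_add (x y : Car R M n) (i : ℕ) :
    pad R M n (x + y) i = pad R M n x i + pad R M n y i := by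
  unfold pad
  split
  · rfl
  · rw [add_zero]

lemma pad_one (i : ℕ) : pad R M n (trivOne R M n) i = oneN R M i := by
  unfold pad
  split
  · rfl
  · next hni =>
      obtain ⟨m, rfl⟩ : ∃ m, i = m + 1 := ⟨i - 1, by omega⟩
      rfl

lemma trivMul_apply (Φ : ∀ i j, M i → M j → M (i + j)) (x y : Car R M n) (k : Fin (n + 1)) :
    trivMul R M n Φ x y k = convP R M Φ (pad R M n x) (pad R M n y) (k : ℕ) := by
  unfold trivMul convP
  refine (Finset.sum_subset
    (Finset.range_subset_range.mpr (by have := k.isLt; omega)) fun i hi hni => ?_).symm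
  have hik : ¬ i ≤ (k : ℕ) := by simp only [Finset.mem_range] at hni; omega
  exact dif_neg hik

lemma pad_trivMul (Φ : ∀ i j, M i → M j → M (i + j))
    (htriv : ∀ i, n < i → Subsingleton (M i)) (x y : Car R M n) (i : ℕ) :
    pad R M n (trivMul R M n Φ x y) i = convP R M Φ (pad R M n x) (pad R M n y) i := by
  by_cases hi : i < n + 1
  · have h1 : pad R M n (trivMul R M n Φ x y) i = trivMul R M n Φ x y ⟨i, hi⟩ := dif_pos hi
    rw [h1, trivMul_apply]
  · rw [show pad R M n (trivMul R M n Φ x y) i = 0 from dif_neg hi]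
    exact (eq_zero_of_gt R M n htriv (by omega) _).symm

end Aux

/-- Given a ring `R`, a family of `R`-bimodules `(M_i)` (extended by the zero
bimodule above index `n`, encoding the convention that products landing beyond index `n`
vanish) and associative `R`-bilinear pre-products `Φ_{i,j} : M_i × M_j → M_{i+j}`, the additive
group `R ⊕ M_1 ⊕ ⋯ ⊕ M_n`, equipped with the convolution multiplication
`((m_i)ᵢ (m'_j)_j)_k = ∑_{i+j=k} m_i m'_j`, is an associative unital ring with
identity `(1,0,…,0)`: the `n`-trivial extension `R ⋉ₙ M`. -/
theorem statement_0
    (Φ : ∀ i j, M i → M j → M (i + j))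
    (hadd_left : ∀ i j (a a' : M i) (b : M j), Φ i j (a + a') b = Φ i j a b + Φ i j a' b)
    (hadd_right : ∀ i j (a : M i) (b b' : M j), Φ i j a (b + b') = Φ i j a b + Φ i j a b')
    (hsmul_left : ∀ i j (r : R) (a : M i) (b : M j), Φ i j (r • a) b = r • Φ i j a b)
    (hsmul_right : ∀ i j (r : Rᵐᵒᵖ) (a : M i) (b : M j), Φ i j a (r • b) = r • Φ i j a b)
    (hbalanced : ∀ i j (r : R) (a : M i) (b : M j),
      Φ i j (MulOpposite.op r • a) b = Φ i j a (r • b))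
    (hassoc : ∀ i j k (a : M i) (b : M j) (c : M k),
      Φ (i + j) k (Φ i j a b) c = mcast (M := M) (add_assoc i j k).symm (Φ i (j + k) a (Φ j k b c)))
    (htriv : ∀ i, n < i → Subsingleton (M i)) :
    (∀ x y z : Car R M n,
        trivMul R M n Φ (trivMul R M n Φ x y) z = trivMul R M n Φ x (trivMul R M n Φ y z)) ∧
    (∀ x : Car R M n, trivMul R M n Φ (trivOne R M n) x = x) ∧
    (∀ x : Car R M n, trivMul R M n Φ x (trivOne R M n) = x) ∧
    (∀ x y z : Car R M n,
        trivMul R M n Φ x (y + z) = trivMul R M n Φ x y + trivMul R M n Φ x z) ∧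
    (∀ x y z : Car R M n,
        trivMul R M n Φ (x + y) z = trivMul R M n Φ x z + trivMul R M n Φ y z) := by
  have hpadmul : ∀ x y : Car R M n,
      pad R M n (trivMul R M n Φ x y) = convP R M Φ (pad R M n x) (pad R M n y) :=
    fun x y => funext (pad_trivMul R M n Φ htriv x y)
  refine ⟨?_, ?_, ?_, ?_, ?_⟩
  · intro x y z
    funext k
    rw [trivMul_apply R M n Φ, trivMul_apply R M n Φ, hpadmul x y, hpadmul y z]
    exact convP_assoc R M Φ hadd_left hadd_right hsmul_left hsmul_right hbalanced hassoc
      (pad R M n x) (pad R M n y) (pad R M n z) k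
  · intro x
    funext k
    rw [trivMul_apply R M n Φ,
      show pad R M n (trivOne R M n) = oneN R M from funext (pad_one R M n),
      convP_one_left R M Φ hadd_left, pad_apply]
  · intro x
    funext k
    rw [trivMul_apply R M n Φ,
      show pad R M n (trivOne R M n) = oneN R M from funext (pad_one R M n),
      convP_one_right R M Φ hadd_right, pad_apply]
  · intro x y z
    funext k
    show trivMul R M n Φ x (y + z) k = trivMul R M n Φ x y k + trivMul R M n Φ x z k
    rw [trivMul_apply R M n Φ, trivMul_apply R M n Φ, trivMul_apply R M n Φ,
      show pad R M n (y + z) = (fun i => pad R M n y i + pad R M n z i) from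
        funext (pad_add R M n y z)]
    exact convP_add_right R M Φ hadd_right _ _ _ _
  · intro x y z
    funext k
    show trivMul R M n Φ (x + y) z k = trivMul R M n Φ x z k + trivMul R M n Φ y z k
    rw [trivMul_apply R M n Φ, trivMul_apply R M n Φ, trivMul_apply R M n Φ,
      show pad R M n (x + y) = (fun i => pad R M n x i + pad R M n y i) from
        funext (pad_add R M n x y)]
    exact convP_add_left R M Φ hadd_left _ _ _ _

end NTriv
end

section
/- Let S = R ⋉_n M be an n-trivial extension. Given a left R-module X together with R-linear maps α_i : M_i ⊗_R X → X for 1 ≤ i ≤ n such that (i) α_i ∘ (M_i ⊗ α_j) = 0 whenever i+j > n, and (ii) α_{i+j} ∘ (Φ̃_{i,j} ⊗ id_X) = α_i ∘ (id_{M_i} ⊗ α_j) whenever i+j ≤ n, then the formula (a, m_1, …, m_n)·x = a·x + ∑_{i=1}^n α_i(m_i ⊗ x) defines a unital left S-module structure on X. -/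
namespace NTriv

variable (R : Type) [Ring R] (M : ℕ → Type)
variable [∀ i, AddCommGroup (M i)] [∀ i, Module R (M i)] [∀ i, Module Rᵐᵒᵖ (M i)]
variable [∀ i, SMulCommClass R Rᵐᵒᵖ (M i)]
variable (n : ℕ)

/-- The action `(a, m₁, …, m_n) ⬝ x = a ⬝ x + ∑ᵢ αᵢ(mᵢ ⊗ x)` of the `n`-trivial extension on an
`R`-module `X` equipped with maps `αᵢ : Mᵢ ⊗ X → X` (given as `R`-balanced bilinear maps
`αᵢ : Mᵢ → X → X`, which is the same data as `R`-linear maps on the tensor product). -/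
def trivSMul (X : Type) [AddCommGroup X] [Module R X]
    (α : ∀ i, M i → X → X) (s : Car R M n) (x : X) : X :=
  toR R M (s ⟨0, Nat.succ_pos n⟩) • x +
    ∑ i ∈ Finset.range n, α (i + 1) (toM R M (pad R M n s (i + 1))) x

section Aux
set_option linter.unusedSectionVars false

variable {R : Type} [Ring R] {M : ℕ → Type}
variable [∀ i, AddCommGroup (M i)] [∀ i, Module R (M i)] [∀ i, Module Rᵐᵒᵖ (M i)]
variable [∀ i, SMulCommClass R Rᵐᵒᵖ (M i)]
variable {X : Type} [AddCommGroup X] [Module R X]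

/-- The action of a single homogeneous component. -/
def act (α : ∀ i, M i → X → X) : ∀ i, ExtFam R M i → X → X
  | 0, e, x => toR R M e • x
  | i+1, e, x => α (i+1) (toM R M e) x

variable {α : ∀ i, M i → X → X}

lemma act_cast {i j : ℕ} (h : i = j) (e : ExtFam R M i) (x : X) :
    act α j (ecast R M h e) x = act α i e x := by subst h; rfl

lemma alpha_cast {i j : ℕ} (h : i = j) (m : M i) (x : X) :
    α j (mcast (M := M) h m) x = α i m x := by subst h; rfl

lemma alpha_zero_left (αsmul : ∀ i (r : R) (m : M i) (x : X), α i (r • m) x = r • α i m x)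
    (i : ℕ) (x : X) : α i 0 x = 0 := by
  have h := αsmul i 0 0 x
  simpa using h

lemma alpha_zero_right
    (αadd_right : ∀ i (m : M i) (x x' : X), α i m (x + x') = α i m x + α i m x')
    (i : ℕ) (m : M i) : α i m 0 = 0 := by
  have h := αadd_right i m 0 0
  rw [add_zero] at h
  exact (left_eq_add.mp h)

lemma act_add_left
    (αadd_left : ∀ i (m m' : M i) (x : X), α i (m + m') x = α i m x + α i m' x)
    (i : ℕ) (e e' : ExtFam R M i) (x : X) :
    act α i (e + e') x = act α i e x + act α i e' x := by
  cases i with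
  | zero => exact add_smul _ _ _
  | succ i => exact αadd_left _ _ _ _

lemma act_zero_left
    (αsmul : ∀ i (r : R) (m : M i) (x : X), α i (r • m) x = r • α i m x)
    (i : ℕ) (x : X) : act α i (0 : ExtFam R M i) x = 0 := by
  cases i with
  | zero => exact zero_smul _ _
  | succ i => exact alpha_zero_left αsmul _ _

lemma act_add_right
    (αadd_right : ∀ i (m : M i) (x x' : X), α i m (x + x') = α i m x + α i m x')
    (i : ℕ) (e : ExtFam R M i) (x y : X) :
    act α i e (x + y) = act α i e x + act α i e y := by
  cases i with
  | zero => exact smul_add _ _ _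
  | succ i => exact αadd_right _ _ _ _

lemma act_zero_right
    (αadd_right : ∀ i (m : M i) (x x' : X), α i m (x + x') = α i m x + α i m x')
    (i : ℕ) (e : ExtFam R M i) : act α i e (0 : X) = 0 := by
  cases i with
  | zero => exact smul_zero _
  | succ i => exact alpha_zero_right αadd_right _ _

lemma act_sum_left
    (αadd_left : ∀ i (m m' : M i) (x : X), α i (m + m') x = α i m x + α i m' x)
    (αsmul : ∀ i (r : R) (m : M i) (x : X), α i (r • m) x = r • α i m x)
    {ι : Type} (s : Finset ι) (i : ℕ) (f : ι → ExtFam R M i) (x : X) :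
    act α i (∑ j ∈ s, f j) x = ∑ j ∈ s, act α i (f j) x := by
  classical
  induction s using Finset.induction with
  | empty => simpa using act_zero_left αsmul i x
  | insert _ _ hnot ih =>
      rw [Finset.sum_insert hnot, Finset.sum_insert hnot,
        act_add_left αadd_left, ih]

lemma act_sum_right
    (αadd_right : ∀ i (m : M i) (x x' : X), α i m (x + x') = α i m x + α i m x')
    {ι : Type} (s : Finset ι) (i : ℕ) (e : ExtFam R M i) (f : ι → X) :
    act α i e (∑ j ∈ s, f j) = ∑ j ∈ s, act α i e (f j) := by
  classical
  induction s using Finset.induction with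
  | empty => simpa using act_zero_right αadd_right i e
  | insert _ _ hnot ih =>
      rw [Finset.sum_insert hnot, Finset.sum_insert hnot,
        act_add_right αadd_right, ih]

lemma act_extProd {n : ℕ} (Φ : ∀ i j, M i → M j → M (i + j))
    (αsmul : ∀ i (r : R) (m : M i) (x : X), α i (r • m) x = r • α i m x)
    (αbalanced : ∀ i (r : R) (m : M i) (x : X),
      α i (MulOpposite.op r • m) x = α i m (r • x))
    (hcond2 : ∀ i j, 1 ≤ i → 1 ≤ j → i + j ≤ n →
      ∀ (m : M i) (m' : M j) (x : X), α (i + j) (Φ i j m m') x = α i m (α j m' x))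
    (i j : ℕ) (hij : i + j ≤ n) (e : ExtFam R M i) (f : ExtFam R M j) (x : X) :
    act α (i + j) (extProd R M Φ i j e f) x = act α i e (act α j f x) := by
  match i, j with
  | 0, 0 => exact mul_smul _ _ _
  | 0, j+1 =>
      show α (0 + j + 1) (mcast (M := M) _ (toR R M e • toM R M f)) x = _
      rw [alpha_cast (α := α) (show j + 1 = 0 + j + 1 by omega), αsmul]
      rfl
  | i+1, 0 =>
      show α (i + 1) (MulOpposite.op (toR R M f) • toM R M e) x = _
      rw [αbalanced]
      rfl
  | i+1, j+1 =>
      show α ((i+1) + (j+1)) (Φ (i+1) (j+1) (toM R M e) (toM R M f)) x = _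
      exact hcond2 (i+1) (j+1) (Nat.succ_le_succ (Nat.zero_le _))
        (Nat.succ_le_succ (Nat.zero_le _)) hij _ _ _

lemma trivSMul_eq_sum {n : ℕ} (s : Car R M n) (x : X) :
    trivSMul R M n X α s x = ∑ k ∈ Finset.range (n + 1), act α k (pad R M n s k) x := by
  rw [Finset.sum_range_succ']
  unfold trivSMul
  rw [add_comm]
  congr 1

lemma sum_reindex {β : Type} [AddCommMonoid β] (n : ℕ) (F : ℕ → ℕ → β)
    (hF : ∀ i j, i ≤ n → j ≤ n → n < i + j → F i j = 0) :
    ∑ k ∈ Finset.range (n+1), ∑ i ∈ Finset.range (n+1), (if i ≤ k then F i (k-i) else 0)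
      = ∑ i ∈ Finset.range (n+1), ∑ j ∈ Finset.range (n+1), F i j := by
  classical
  have step1 : ∀ k ∈ Finset.range (n+1),
      ∑ i ∈ Finset.range (n+1), (if i ≤ k then F i (k-i) else 0)
        = ∑ i ∈ Finset.range (k+1), F i (k-i) := by
    intro k hk
    have hk' : k < n + 1 := Finset.mem_range.mp hk
    rw [← Finset.sum_subset (Finset.range_subset_range.mpr (by omega : k+1 ≤ n+1))
        (fun i hi hni => if_neg (by simp only [Finset.mem_range] at hi hni; omega))]
    exact Finset.sum_congr rfl fun i hi =>
      if_pos (by simp only [Finset.mem_range] at hi; omega)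
  calc ∑ k ∈ Finset.range (n+1), ∑ i ∈ Finset.range (n+1), (if i ≤ k then F i (k-i) else 0)
      = ∑ k ∈ Finset.range (n+1), ∑ i ∈ Finset.range (k+1), F i (k-i) :=
        Finset.sum_congr rfl step1
    _ = ∑ p ∈ (Finset.range (n+1)).sigma (fun k => Finset.range (k+1)), F p.2 (p.1 - p.2) :=
        by rw [Finset.sum_sigma]
    _ = ∑ q ∈ (Finset.range (n+1) ×ˢ Finset.range (n+1)).filter (fun q => q.1 + q.2 ≤ n),
          F q.1 q.2 := by
        refine Finset.sum_nbij' (fun p => (p.2, p.1 - p.2)) (fun q => ⟨q.1 + q.2, q.1⟩)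
          ?_ ?_ ?_ ?_ ?_
        · intro a ha
          simp only [Finset.mem_sigma, Finset.mem_range] at ha
          simp only [Finset.mem_filter, Finset.mem_product, Finset.mem_range]
          omega
        · intro a ha
          simp only [Finset.mem_filter, Finset.mem_product, Finset.mem_range] at ha
          simp only [Finset.mem_sigma, Finset.mem_range]
          omega
        · intro a ha
          obtain ⟨k, i⟩ := a
          simp only [Finset.mem_sigma, Finset.mem_range] at ha
          show (⟨i + (k - i), i⟩ : Σ _ : ℕ, ℕ) = ⟨k, i⟩
          rw [show i + (k - i) = k by omega]
        · intro a ha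
          simp only [Finset.mem_filter, Finset.mem_product, Finset.mem_range] at ha
          show (a.1, a.1 + a.2 - a.1) = a
          rw [show a.1 + a.2 - a.1 = a.2 by omega]
        · intro a ha; rfl
    _ = ∑ q ∈ Finset.range (n+1) ×ˢ Finset.range (n+1), F q.1 q.2 := by
        refine Finset.sum_filter_of_ne ?_
        intro q hq hne
        by_contra h
        simp only [Finset.mem_product, Finset.mem_range] at hq
        exact hne (hF q.1 q.2 (by omega) (by omega) (by omega))
    _ = ∑ i ∈ Finset.range (n+1), ∑ j ∈ Finset.range (n+1), F i j := Finset.sum_product _ _ _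

end Aux

/-- Let `X` be a left `R`-module with maps `αᵢ : Mᵢ ⊗_R X → X` (presented as
`R`-bilinear balanced maps `αᵢ : Mᵢ → X → X`) for `1 ≤ i ≤ n` such that
(i) `αᵢ ∘ (Mᵢ ⊗ α_j) = 0` whenever `i + j > n`, and
(ii) `α_{i+j} ∘ (Φ̃_{i,j} ⊗ id) = αᵢ ∘ (id ⊗ α_j)` whenever `i + j ≤ n`.
Then `(a, m₁, …, m_n) ⬝ x = a ⬝ x + ∑ αᵢ(mᵢ ⊗ x)` defines a unital left module structure
over `S = R ⋉ₙ M` on `X`. -/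
theorem statement_2
    (Φ : ∀ i j, M i → M j → M (i + j))
    (hadd_left : ∀ i j (a a' : M i) (b : M j), Φ i j (a + a') b = Φ i j a b + Φ i j a' b)
    (hadd_right : ∀ i j (a : M i) (b b' : M j), Φ i j a (b + b') = Φ i j a b + Φ i j a b')
    (hsmul_left : ∀ i j (r : R) (a : M i) (b : M j), Φ i j (r • a) b = r • Φ i j a b)
    (hsmul_right : ∀ i j (r : Rᵐᵒᵖ) (a : M i) (b : M j), Φ i j a (r • b) = r • Φ i j a b)
    (hbalanced : ∀ i j (r : R) (a : M i) (b : M j),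
      Φ i j (MulOpposite.op r • a) b = Φ i j a (r • b))
    (hassoc : ∀ i j k (a : M i) (b : M j) (c : M k),
      Φ (i + j) k (Φ i j a b) c = mcast (M := M) (add_assoc i j k).symm (Φ i (j + k) a (Φ j k b c)))
    (htriv : ∀ i, n < i → Subsingleton (M i))
    (X : Type) [AddCommGroup X] [Module R X]
    (α : ∀ i, M i → X → X)
    -- each `αᵢ` corresponds to an `R`-linear map `Mᵢ ⊗_R X → X`:
    (αadd_left : ∀ i (m m' : M i) (x : X), α i (m + m') x = α i m x + α i m' x)
    (αadd_right : ∀ i (m : M i) (x x' : X), α i m (x + x') = α i m x + α i m x')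
    (αsmul : ∀ i (r : R) (m : M i) (x : X), α i (r • m) x = r • α i m x)
    (αbalanced : ∀ i (r : R) (m : M i) (x : X),
      α i (MulOpposite.op r • m) x = α i m (r • x))
    -- condition (i):
    (hcond1 : ∀ i j, 1 ≤ i → i ≤ n → 1 ≤ j → j ≤ n → n < i + j →
      ∀ (m : M i) (m' : M j) (x : X), α i m (α j m' x) = 0)
    -- condition (ii):
    (hcond2 : ∀ i j, 1 ≤ i → 1 ≤ j → i + j ≤ n →
      ∀ (m : M i) (m' : M j) (x : X), α (i + j) (Φ i j m m') x = α i m (α j m' x)) :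
    (∀ x : X, trivSMul R M n X α (trivOne R M n) x = x) ∧
    (∀ (s t : Car R M n) (x : X),
      trivSMul R M n X α (trivMul R M n Φ s t) x = trivSMul R M n X α s (trivSMul R M n X α t x)) ∧
    (∀ (s t : Car R M n) (x : X),
      trivSMul R M n X α (s + t) x = trivSMul R M n X α s x + trivSMul R M n X α t x) ∧
    (∀ (s : Car R M n) (x y : X),
      trivSMul R M n X α s (x + y) = trivSMul R M n X α s x + trivSMul R M n X α s y) := by
  classical
  have hpad_add : ∀ (s t : Car R M n) (i : ℕ),
      pad R M n (s + t) i = pad R M n s i + pad R M n t i := by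
    intro s t i
    unfold pad
    split
    · rfl
    · simp
  refine ⟨?_, ?_, ?_, ?_⟩
  · -- identity acts as identity
    intro x
    unfold trivSMul
    have h0 : toR R M (trivOne R M n ⟨0, Nat.succ_pos n⟩) = 1 := rfl
    rw [h0, one_smul]
    have hz : ∀ i ∈ Finset.range n,
        α (i+1) (toM R M (pad R M n (trivOne R M n) (i+1))) x = 0 := by
      intro i _
      have hp : pad R M n (trivOne R M n) (i+1) = 0 := by
        unfold pad
        split
        · rfl
        · rfl
      rw [hp]
      exact alpha_zero_left αsmul _ _
    rw [Finset.sum_congr rfl hz, Finset.sum_const_zero, add_zero]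
  · -- compatibility with multiplication
    intro s t x
    have hvan : ∀ i j, i ≤ n → j ≤ n → n < i + j →
        act α i (pad R M n s i) (act α j (pad R M n t j) x) = 0 := by
      intro i j hi hj hij
      cases i with
      | zero => omega
      | succ i =>
        cases j with
        | zero => omega
        | succ j =>
          exact hcond1 (i+1) (j+1) (Nat.succ_le_succ (Nat.zero_le _)) hi
            (Nat.succ_le_succ (Nat.zero_le _)) hj hij _ _ _
    have hL : trivSMul R M n X α (trivMul R M n Φ s t) x
        = ∑ k ∈ Finset.range (n+1), ∑ i ∈ Finset.range (n+1),
            (if i ≤ k then act α i (pad R M n s i) (act α (k-i) (pad R M n t (k-i)) x)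
             else 0) := by
      rw [trivSMul_eq_sum]
      refine Finset.sum_congr rfl fun k hk => ?_
      have hk' : k < n + 1 := Finset.mem_range.mp hk
      have hpad : pad R M n (trivMul R M n Φ s t) k
          = ∑ i ∈ Finset.range (n+1), (if h : i ≤ k then
              ecast R M (by omega)
                (extProd R M Φ i (k - i) (pad R M n s i) (pad R M n t (k-i)))
            else (0 : ExtFam R M k)) := by
        unfold pad
        rw [dif_pos hk']
        rfl
      rw [hpad, act_sum_left αadd_left αsmul]
      refine Finset.sum_congr rfl fun i hi => ?_
      by_cases h : i ≤ k
      · rw [dif_pos h, if_pos h, act_cast (α := α),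
          act_extProd Φ αsmul αbalanced hcond2 i (k-i) (by omega)]
      · rw [dif_neg h, if_neg h, act_zero_left αsmul]
    have hR : trivSMul R M n X α s (trivSMul R M n X α t x)
        = ∑ i ∈ Finset.range (n+1), ∑ j ∈ Finset.range (n+1),
            act α i (pad R M n s i) (act α j (pad R M n t j) x) := by
      rw [trivSMul_eq_sum, trivSMul_eq_sum]
      exact Finset.sum_congr rfl fun i _ => act_sum_right αadd_right _ _ _ _
    rw [hL, hR]
    exact sum_reindex n
      (fun i j => act α i (pad R M n s i) (act α j (pad R M n t j) x)) hvan
  · -- additivity in the scalar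
    intro s t x
    rw [trivSMul_eq_sum, trivSMul_eq_sum, trivSMul_eq_sum, ← Finset.sum_add_distrib]
    refine Finset.sum_congr rfl fun k _ => ?_
    rw [hpad_add, act_add_left αadd_left]
  · -- additivity in the vector
    intro s x y
    rw [trivSMul_eq_sum, trivSMul_eq_sum, trivSMul_eq_sum, ← Finset.sum_add_distrib]
    exact Finset.sum_congr rfl fun k _ => act_add_right αadd_right _ _ _ _


end NTriv
end
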